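/- Let α, β, γ, δ ∈ ℂ satisfy |α|² + |β|² + |γ|² + |δ|² = 1 and α·δ = β·γ. In the space of 2×2 complex matrices equipped with the ℓ²→ℓ² operator norm, set u = !![1,0;0,0] and v = !![α,β;γ,δ]. Then ‖u − v‖² = (1 − Re α) + √( (1 − Re α)² − |δ|² ). -/

import Mathlib

noncomputable section

set_option maxHeartbeats 1000000

private lemma sq_abs_expand (a b x y : ℂ) : ‖a*x + b*y‖^2
    = ‖a‖^2 * ‖x‖^2 + ‖b‖^2 * ‖y‖^2
      + 2 * (((starRingEnd ℂ) a * b) * ((starRingEnd ℂ) x * y)).re := by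
  simp only [Complex.sq_norm, Complex.normSq_apply, Complex.add_re, Complex.add_im,
    Complex.mul_re, Complex.mul_im, Complex.conj_re, Complex.conj_im]
  ring

private lemma quad_ineq (p q lam u v X Y R : ℝ) (hu2 : u^2 = lam - p) (hv2 : v^2 = lam - q)
    (hR : R ≤ u * v * (X * Y)) :
    p * X^2 + q * Y^2 + 2 * R ≤ lam * (X^2 + Y^2) := by
  nlinarith [sq_nonneg (u*X - v*Y), sq_nonneg X, sq_nonneg Y]

private lemma helper_norm (M : Matrix (Fin 2) (Fin 2) ℂ) (lam : ℝ) (hlam : 0 ≤ lam)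
    (hub : ∀ x₁ x₂ : ℂ, ‖M 0 0 * x₁ + M 0 1 * x₂‖ ^ 2
        + ‖M 1 0 * x₁ + M 1 1 * x₂‖ ^ 2
        ≤ lam * (‖x₁‖ ^ 2 + ‖x₂‖ ^ 2))
    (hlb : ∃ x₁ x₂ : ℂ, (x₁ ≠ 0 ∨ x₂ ≠ 0) ∧ ‖M 0 0 * x₁ + M 0 1 * x₂‖ ^ 2
        + ‖M 1 0 * x₁ + M 1 1 * x₂‖ ^ 2
        = lam * (‖x₁‖ ^ 2 + ‖x₂‖ ^ 2)) :
    ‖Matrix.toEuclideanCLM (𝕜 := ℂ) (n := Fin 2) M‖ = Real.sqrt lam := by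
  set T := Matrix.toEuclideanCLM (𝕜 := ℂ) (n := Fin 2) M with hT
  have hTx : ∀ (x : EuclideanSpace ℂ (Fin 2)), ‖T x‖ ^ 2
      = ‖M 0 0 * x 0 + M 0 1 * x 1‖ ^ 2
        + ‖M 1 0 * x 0 + M 1 1 * x 1‖ ^ 2 := by
    intro x
    rw [EuclideanSpace.norm_eq, Real.sq_sqrt (by positivity)]
    have h0 : ∀ i, (T x) i = M.mulVec (fun j => x j) i := fun i => rfl
    simp [Fin.sum_univ_two, h0, Matrix.mulVec, dotProduct]
  have hx2 : ∀ (x : EuclideanSpace ℂ (Fin 2)), ‖x‖ ^ 2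
      = ‖x 0‖ ^ 2 + ‖x 1‖ ^ 2 := by
    intro x
    rw [EuclideanSpace.norm_eq, Real.sq_sqrt (by positivity)]
    simp [Fin.sum_univ_two]
  apply le_antisymm
  · apply ContinuousLinearMap.opNorm_le_bound _ (Real.sqrt_nonneg _)
    intro x
    have h1 : ‖T x‖ ^ 2 ≤ lam * ‖x‖ ^ 2 := by rw [hTx, hx2]; exact hub _ _
    have h2 := Real.sqrt_le_sqrt h1
    rwa [Real.sqrt_sq (norm_nonneg _), Real.sqrt_mul hlam, Real.sqrt_sq (norm_nonneg _)] at h2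
  · obtain ⟨x₁, x₂, hne, heq⟩ := hlb
    set x : EuclideanSpace ℂ (Fin 2) := (WithLp.equiv 2 (Fin 2 → ℂ)).symm ![x₁, x₂] with hxdef
    have hx0 : x 0 = x₁ := rfl
    have hx1 : x 1 = x₂ := rfl
    have hxne : x ≠ 0 := by
      intro h
      rcases hne with h1 | h1
      · exact h1 (by rw [← hx0, h]; rfl)
      · exact h1 (by rw [← hx1, h]; rfl)
    have hxpos : 0 < ‖x‖ := norm_pos_iff.mpr hxne
    have h1 : ‖T x‖ ^ 2 = lam * ‖x‖ ^ 2 := by rw [hTx, hx2, hx0, hx1]; exact heq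
    have h2 : ‖T x‖ ≤ ‖T‖ * ‖x‖ := T.le_opNorm x
    have h3 : lam * ‖x‖ ^ 2 ≤ ‖T‖ ^ 2 * ‖x‖ ^ 2 := by
      rw [← h1]
      nlinarith [norm_nonneg (T x), norm_nonneg x]
    have h4 : lam ≤ ‖T‖ ^ 2 := le_of_mul_le_mul_right h3 (by positivity)
    have h5 := Real.sqrt_le_sqrt h4
    rwa [Real.sqrt_sq (norm_nonneg _)] at h5

/-- The distance between the minimal tripotent `!![1,0;0,0]` and a minimal tripotent
`!![α,β;γ,δ]` in `M₂(ℂ)` with the `ℓ²→ℓ²` operator norm. -/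
theorem norm_sub_sq_matrix_minimal_tripotents
    (α β γ δ : ℂ)
    (hnorm : ‖α‖ ^ 2 + ‖β‖ ^ 2 + ‖γ‖ ^ 2 + ‖δ‖ ^ 2 = 1)
    (hdet : α * δ = β * γ) :
    ‖Matrix.toEuclideanCLM (𝕜 := ℂ) (n := Fin 2) !![1, 0; 0, 0] -
        Matrix.toEuclideanCLM (𝕜 := ℂ) (n := Fin 2) !![α, β; γ, δ]‖ ^ 2 =
      (1 - α.re) + Real.sqrt ((1 - α.re) ^ 2 - ‖δ‖ ^ 2) := by
  obtain ⟨r, hr⟩ : ∃ r : ℝ, r = 1 - α.re := ⟨_, rfl⟩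
  obtain ⟨d, hd⟩ : ∃ d : ℝ, d = ‖δ‖ ^ 2 := ⟨_, rfl⟩
  obtain ⟨p, hp⟩ : ∃ p : ℝ, p = ‖1 - α‖ ^ 2 + ‖γ‖ ^ 2 := ⟨_, rfl⟩
  obtain ⟨q, hq⟩ : ∃ q : ℝ, q = ‖β‖ ^ 2 + ‖δ‖ ^ 2 := ⟨_, rfl⟩
  obtain ⟨m, hm⟩ : ∃ m : ℂ, m = (starRingEnd ℂ) (1 - α) * (-β) + (starRingEnd ℂ) (-γ) * (-δ) :=
    ⟨_, rfl⟩
  have hp0 : 0 ≤ p := by rw [hp]; positivity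
  have hq0 : 0 ≤ q := by rw [hq]; positivity
  have hd0 : 0 ≤ d := by rw [hd]; positivity
  have habs1 : ‖1 - α‖ ^ 2 = 1 - 2*α.re + ‖α‖ ^ 2 := by
    simp only [Complex.sq_norm, Complex.normSq_apply, Complex.sub_re, Complex.sub_im,
      Complex.one_re, Complex.one_im]
    ring
  have hF1 : p + q = 2 * r := by rw [hp, hq, habs1, hr]; linarith [hnorm]
  have hdet' : (starRingEnd ℂ) α * (starRingEnd ℂ) δ = (starRingEnd ℂ) β * (starRingEnd ℂ) γ := by
    have := congrArg (starRingEnd ℂ) hdet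
    simpa [map_mul] using this
  have cast_abs : ∀ z : ℂ, ((‖z‖ : ℝ) : ℂ) ^ 2 = z * (starRingEnd ℂ) z := fun z => by
    rw [← Complex.ofReal_pow, Complex.sq_norm, Complex.mul_conj]
  have hF2C : ((‖m‖ ^ 2 : ℝ) : ℂ) = ((p * q - d : ℝ) : ℂ) := by
    rw [hp, hq, hd]
    push_cast
    rw [cast_abs, cast_abs, cast_abs, cast_abs, cast_abs]
    rw [hm]
    simp only [map_add, map_mul, map_neg, map_sub, map_one, Complex.conj_conj]
    linear_combination ((starRingEnd ℂ) δ - ((starRingEnd ℂ) α * (starRingEnd ℂ) δ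
      - (starRingEnd ℂ) β * (starRingEnd ℂ) γ)) * hdet + δ * hdet'
  have hF2 : ‖m‖ ^ 2 = p * q - d := by exact_mod_cast hF2C
  have hm0 : 0 ≤ ‖m‖ ^ 2 := by positivity
  have hF3 : 0 ≤ r ^ 2 - d := by nlinarith [sq_nonneg (p - q)]
  obtain ⟨s, hs⟩ : ∃ s : ℝ, s = Real.sqrt (r ^ 2 - d) := ⟨_, rfl⟩
  have hs0 : 0 ≤ s := hs ▸ Real.sqrt_nonneg _
  have hs2 : s ^ 2 = r ^ 2 - d := by rw [hs]; exact Real.sq_sqrt hF3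
  obtain ⟨lam, hlamdef⟩ : ∃ lam : ℝ, lam = r + s := ⟨_, rfl⟩
  have hr0 : 0 ≤ r := by linarith
  have hlam : 0 ≤ lam := by rw [hlamdef]; positivity
  have hkey : (2*s - (p - q)) * (2*s + (p - q)) = 4 * ‖m‖ ^ 2 := by
    linear_combination 4*hs2 - 4*hF2 - (2*r + p + q)*hF1
  have hlp : 0 ≤ lam - p := by nlinarith [hkey, hm0, hs0]
  have hlq : 0 ≤ lam - q := by nlinarith [hkey, hm0, hs0]
  have hprod : (lam - p) * (lam - q) = ‖m‖ ^ 2 := by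
    rw [hlamdef]; linear_combination hs2 - hF2 - (r + s) * hF1
  -- the upper bound
  have hub : ∀ x₁ x₂ : ℂ, ‖(1-α) * x₁ + (-β) * x₂‖ ^ 2
      + ‖(-γ) * x₁ + (-δ) * x₂‖ ^ 2
      ≤ lam * (‖x₁‖ ^ 2 + ‖x₂‖ ^ 2) := by
    intro x₁ x₂
    rw [sq_abs_expand, sq_abs_expand]
    obtain ⟨w, hw⟩ : ∃ w : ℂ, w = (starRingEnd ℂ) x₁ * x₂ := ⟨_, rfl⟩
    rw [← hw]
    have habsw : ‖w‖ = ‖x₁‖ * ‖x₂‖ := by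
      rw [hw, norm_mul, Complex.norm_conj]
    have hretotal : ((starRingEnd ℂ) (1-α) * (-β) * w).re + ((starRingEnd ℂ) (-γ) * (-δ) * w).re
        = (m * w).re := by
      rw [← Complex.add_re]
      congr 1
      rw [hm]; ring
    have hre : (m * w).re ≤ ‖m‖ * (‖x₁‖ * ‖x₂‖) := by
      calc (m * w).re ≤ ‖m * w‖ := Complex.re_le_norm _
        _ = ‖m‖ * (‖x₁‖ * ‖x₂‖) := by rw [norm_mul, habsw]
    obtain ⟨u, hu⟩ : ∃ u : ℝ, u = Real.sqrt (lam - p) := ⟨_, rfl⟩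
    obtain ⟨v, hv⟩ : ∃ v : ℝ, v = Real.sqrt (lam - q) := ⟨_, rfl⟩
    have hu2 : u ^ 2 = lam - p := by rw [hu]; exact Real.sq_sqrt hlp
    have hv2 : v ^ 2 = lam - q := by rw [hv]; exact Real.sq_sqrt hlq
    have huv : u * v = ‖m‖ := by
      rw [hu, hv, ← Real.sqrt_mul hlp, hprod, Real.sqrt_sq (norm_nonneg m)]
    have hng : ‖-β‖ = ‖β‖ := norm_neg β
    have hngg : ‖-γ‖ = ‖γ‖ := norm_neg γ
    have hngd : ‖-δ‖ = ‖δ‖ := norm_neg δ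
    rw [hng, hngg, hngd]
    have heq2 : ‖1-α‖ ^ 2 * ‖x₁‖ ^ 2 + ‖β‖ ^ 2 * ‖x₂‖ ^ 2
        + 2 * ((starRingEnd ℂ) (1-α) * (-β) * w).re
        + (‖γ‖ ^ 2 * ‖x₁‖ ^ 2 + ‖δ‖ ^ 2 * ‖x₂‖ ^ 2
          + 2 * ((starRingEnd ℂ) (-γ) * (-δ) * w).re)
        = p * ‖x₁‖ ^ 2 + q * ‖x₂‖ ^ 2 + 2 * (m * w).re := by
      rw [hp, hq]
      linear_combination (2 : ℝ) * hretotal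
    rw [heq2]
    exact quad_ineq p q lam u v _ _ _ hu2 hv2 (by rw [← huv] at hre; linarith [hre])
  -- the lower bound
  have hlb : ∃ x₁ x₂ : ℂ, (x₁ ≠ 0 ∨ x₂ ≠ 0) ∧ ‖(1-α) * x₁ + (-β) * x₂‖ ^ 2
      + ‖(-γ) * x₁ + (-δ) * x₂‖ ^ 2
      = lam * (‖x₁‖ ^ 2 + ‖x₂‖ ^ 2) := by
    by_cases hc : m = 0 ∧ lam = p
    · refine ⟨1, 0, Or.inl one_ne_zero, ?_⟩
      simp only [mul_one, mul_zero, add_zero, map_one, map_zero, norm_one, norm_zero]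
      rw [norm_neg γ]
      rw [hc.2, hp]
      ring
    · refine ⟨m, ((lam - p : ℝ) : ℂ), ?_, ?_⟩
      · rcases eq_or_ne m 0 with h | h
        · right
          push_neg at hc
          exact Complex.ofReal_ne_zero.mpr (sub_ne_zero.mpr (hc h))
        · exact Or.inl h
      · rw [sq_abs_expand, sq_abs_expand]
        have hx2abs : ‖((lam - p : ℝ) : ℂ)‖ ^ 2 = (lam - p) ^ 2 := by
          rw [Complex.norm_real, Real.norm_eq_abs, sq_abs]
        have hcomb : (starRingEnd ℂ) (1-α) * (-β) * ((starRingEnd ℂ) m * ((lam - p : ℝ) : ℂ))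
            + (starRingEnd ℂ) (-γ) * (-δ) * ((starRingEnd ℂ) m * ((lam - p : ℝ) : ℂ))
            = ((‖m‖ ^ 2 * (lam - p) : ℝ) : ℂ) := by
          have h1 : (starRingEnd ℂ) (1-α) * (-β) * ((starRingEnd ℂ) m * ((lam - p : ℝ) : ℂ))
              + (starRingEnd ℂ) (-γ) * (-δ) * ((starRingEnd ℂ) m * ((lam - p : ℝ) : ℂ))
              = (m * (starRingEnd ℂ) m) * ((lam - p : ℝ) : ℂ) := by rw [hm]; ring
          rw [h1, Complex.mul_conj, Complex.normSq_eq_norm_sq]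
          push_cast
          ring
        have hre2 : ((starRingEnd ℂ) (1-α) * (-β) * ((starRingEnd ℂ) m * ((lam - p : ℝ) : ℂ))).re
            + ((starRingEnd ℂ) (-γ) * (-δ) * ((starRingEnd ℂ) m * ((lam - p : ℝ) : ℂ))).re
            = ‖m‖ ^ 2 * (lam - p) := by
          rw [← Complex.add_re, hcomb, Complex.ofReal_re]
        rw [norm_neg β, norm_neg γ, norm_neg δ, hx2abs]
        have hpq : ‖1-α‖ ^ 2 = p - ‖γ‖ ^ 2 := by rw [hp]; ring
        have hqq : ‖β‖ ^ 2 = q - ‖δ‖ ^ 2 := by rw [hq]; ring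
        rw [hpq, hqq]
        linear_combination 2 * hre2 + (p - lam) * hprod
  -- assemble
  have hM : (!![1, 0; 0, 0] : Matrix (Fin 2) (Fin 2) ℂ) - !![α, β; γ, δ]
      = !![1 - α, -β; -γ, -δ] := by
    ext i j
    fin_cases i <;> fin_cases j <;> simp [Matrix.sub_apply]
  rw [← map_sub, hM]
  have hmain := helper_norm !![1 - α, -β; -γ, -δ] lam hlam ?_ ?_
  · rw [hmain, Real.sq_sqrt hlam, hlamdef, hs, hr, hd]
  · simpa using hub
  · simpa using hlb
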